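/- Let A be the completion of the monoid algebra E[Σ] of a submonoid Σ of a lattice Λ, where Σ generates a strongly convex rational cone and 0 is the only invertible element of Σ, completed at the augmentation ideal (the ideal generated by nonzero elements of Σ). Then A is a local ring, and an element f ∈ A is a unit if and only if its constant coefficient (the coefficient of the identity element 0 ∈ Σ) is nonzero. -/

import Mathlib

/-!
STATEMENT 8 (Remark `rem:Alocal` of the paper): let `A` be the completion of the
monoid algebra `E[Σ]` of a finitely generated submonoid `Σ` of a lattice `Λ`,
where `Σ` generates a strongly convex rational cone and `0` is its only unit,
completed at the augmentation ideal (the ideal generated by the `e^λ`, `λ ≠ 0`).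
Then `A` is a local ring, and `f ∈ A` is a unit iff its constant coefficient
(its image in `E[Σ]/I`) is nonzero.

Setup: `Λ = ι → ℤ`, `Σ` (`Sg` below) an `AddSubmonoid`, `E[Σ] = AddMonoidAlgebra
E ↥Σ`, and the completion is the `I`-adic completion `AdicCompletion I (E[Σ])`.
The constant coefficient of `f` is its image under `AdicCompletion.eval _ _ 1` in
`E[Σ]/I`.
-/

open scoped BigOperators

noncomputable section

variable {ι : Type*} [Fintype ι]

/-- The rational cone generated by a set of lattice vectors. -/
def ratConeOfSet (S : Set (ι → ℤ)) : Set (ι → ℚ) :=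
  {x | ∃ T : Finset (ι → ℤ), ↑T ⊆ S ∧ ∃ c : (ι → ℤ) → ℚ, (∀ a, 0 ≤ c a) ∧
    x = ∑ a ∈ T, c a • (fun i => ((a i : ℚ)))}

/-- The augmentation ideal of the monoid algebra `E[Σ]`, spanned by the basis
elements `e^λ` for `λ ≠ 0`. -/
def augIdeal (E : Type*) [Field E] (Sg : AddSubmonoid (ι → ℤ)) :
    Ideal (AddMonoidAlgebra E ↥Sg) :=
  Ideal.span {x | ∃ lam : ↥Sg, (lam : ι → ℤ) ≠ 0 ∧
    x = AddMonoidAlgebra.single lam (1 : E)}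

open AdicCompletion in
/-- In the `I`-adic completion of `R` at a maximal ideal `I`, an element is a unit
iff its component at level 1 is nonzero. -/
lemma adic_isUnit_iff {R : Type*} [CommRing R] (I : Ideal R) [hmax : I.IsMaximal]
    (x : AdicCompletion I R) : IsUnit x ↔ x.val 1 ≠ 0 := by
  have hI1 : (I ^ 1 • ⊤ : Ideal R) = I := by ext y; simp
  have hmk0 : ∀ r : R, Ideal.Quotient.mk (I ^ 1 • ⊤ : Ideal R) r = 0 ↔ r ∈ I := by
    intro r
    rw [Ideal.Quotient.eq_zero_iff_mem, hI1]
  have hnt : Nontrivial (R ⧸ (I ^ 1 • ⊤ : Ideal R)) := by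
    refine Ideal.Quotient.nontrivial_iff.mpr ?_
    rw [hI1]; exact hmax.ne_top
  constructor
  · intro hx h0
    obtain ⟨y, hy⟩ := hx.exists_right_inv
    have h1 : x.val 1 * y.val 1 = 1 := by
      rw [← val_mul, hy, val_one]
    rw [h0, zero_mul] at h1
    exact zero_ne_one h1
  · intro hne
    -- each component is a unit
    have hu : ∀ n, IsUnit (x.val n) := by
      intro n
      rcases Nat.eq_zero_or_pos n with rfl | hn
      · have : Subsingleton (R ⧸ (I ^ 0 • ⊤ : Ideal R)) := by
          refine Submodule.Quotient.subsingleton_iff.mpr ?_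
          simp
        exact isUnit_of_subsingleton _
      · obtain ⟨r, hr⟩ := Ideal.Quotient.mk_surjective (I := (I ^ n • ⊤ : Ideal R)) (x.val n)
        have hr1 : Ideal.Quotient.mk (I ^ 1 • ⊤ : Ideal R) r = x.val 1 := by
          have := x.property hn
          rw [← hr] at this
          exact this
        have hrI : r ∉ I := by
          intro hrmem
          exact hne (by rw [← hr1, hmk0]; exact hrmem)
        obtain ⟨s, i, hiI, hsi⟩ := hmax.exists_inv hrI
        have hgeo : (1 - i) * ∑ k ∈ Finset.range n, i ^ k = 1 - i ^ n := by
          linear_combination -geom_sum_mul i n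
        have hkey : r * (s * ∑ k ∈ Finset.range n, i ^ k) = 1 - i ^ n := by
          calc r * (s * ∑ k ∈ Finset.range n, i ^ k)
              = (s * r) * ∑ k ∈ Finset.range n, i ^ k := by ring
            _ = (1 - i) * ∑ k ∈ Finset.range n, i ^ k := by
                rw [show s * r = 1 - i by linear_combination hsi]
            _ = 1 - i ^ n := hgeo
        have hin : (i ^ n : R) ∈ (I ^ n • ⊤ : Ideal R) := by
          have : (I ^ n • ⊤ : Ideal R) = I ^ n := by ext y; simp
          rw [this]
          exact Ideal.pow_mem_pow hiI n
        refine IsUnit.of_mul_eq_one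
          (Ideal.Quotient.mk (I ^ n • ⊤ : Ideal R) (s * ∑ k ∈ Finset.range n, i ^ k)) ?_
        rw [← hr, ← map_mul, hkey]
        rw [show (1 : R ⧸ (I ^ n • ⊤ : Ideal R)) = Ideal.Quotient.mk _ (1 : R) from rfl]
        rw [Ideal.Quotient.eq]
        simpa using hin
    -- build the inverse
    set yv : ∀ n, R ⧸ (I ^ n • ⊤ : Ideal R) := fun n => Ring.inverse (x.val n) with hyv
    have hcomp : ∀ {m n : ℕ} (hmn : m ≤ n), transitionMap I R hmn (yv n) = yv m := by
      intro m n hmn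
      have h1 : x.val m * transitionMap I R hmn (yv n) = 1 := by
        rw [← x.property hmn, ← transitionMap_map_mul, hyv]
        rw [Ring.mul_inverse_cancel _ (hu n)]
        exact transitionMap_map_one I hmn
      calc transitionMap I R hmn (yv n)
          = (yv m * x.val m) * transitionMap I R hmn (yv n) := by
            rw [hyv, Ring.inverse_mul_cancel _ (hu m), one_mul]
        _ = yv m * (x.val m * transitionMap I R hmn (yv n)) := by ring
        _ = yv m := by rw [h1, mul_one]
    refine IsUnit.of_mul_eq_one ⟨yv, hcomp⟩ ?_
    apply Subtype.ext
    funext n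
    show x.val n * yv n = 1
    exact Ring.mul_inverse_cancel _ (hu n)


lemma aug_maximal (E : Type*) [Field E] (Sg : AddSubmonoid (ι → ℤ))
    (hsharp : ∀ x ∈ Sg, -x ∈ Sg → x = 0) : (augIdeal E Sg).IsMaximal := by
  classical
  -- the multiplicative character sending nonzero elements of Sg to 0
  have hadd : ∀ a b : ↥Sg, a + b = 0 → a = 0 := by
    intro a b hab
    have h1 : (a : ι → ℤ) + (b : ι → ℤ) = 0 := by
      have := congrArg (Subtype.val) hab
      simpa using this
    have h2 : -(a : ι → ℤ) ∈ Sg := by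
      rw [show -(a : ι → ℤ) = (b : ι → ℤ) by linear_combination -h1]
      exact b.2
    exact Subtype.ext (hsharp _ a.2 h2)
  let g : Multiplicative ↥Sg →* E :=
  { toFun := fun x => if x = 1 then 1 else 0
    map_one' := if_pos rfl
    map_mul' := fun x y => by
      by_cases hx : x = 1
      · by_cases hy : y = 1 <;> simp [hx, hy]
      · have hxy : x * y ≠ 1 := by
          intro h
          exact hx (hadd x.toAdd y.toAdd h)
        simp [hx, hxy] }
  let ε : AddMonoidAlgebra E ↥Sg →ₐ[E] E := AddMonoidAlgebra.lift E E ↥Sg g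
  have hconst : ∀ f : AddMonoidAlgebra E ↥Sg, ε f = f.coeff 0 := by
    intro f
    rw [show ε f = f.coeff.sum fun a b => b • g (Multiplicative.ofAdd a) from
      AddMonoidAlgebra.lift_apply g f]
    rw [Finsupp.sum]
    rw [Finset.sum_congr rfl (fun a _ => show f.coeff a • g (Multiplicative.ofAdd a)
        = if a = 0 then f.coeff a else 0 by
      by_cases h : a = 0
      · simp [g, h]
      · have : Multiplicative.ofAdd a ≠ 1 := by
          simpa using h
        simp [g, h, this])]
    rw [Finset.sum_ite_eq' f.coeff.support (0 : ↥Sg) f.coeff]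
    by_cases h : (0 : ↥Sg) ∈ f.coeff.support
    · rw [if_pos h]
    · rw [if_neg h, Finsupp.notMem_support_iff.mp h]
  have hsurj : Function.Surjective ε := by
    intro c
    exact ⟨algebraMap E _ c, ε.commutes c⟩
  have hker : RingHom.ker ε.toRingHom = augIdeal E Sg := by
    apply le_antisymm
    · intro f hf
      have h0 : f.coeff 0 = 0 := by
        rw [← hconst f]; exact hf
      rw [← AddMonoidAlgebra.sum_coeff_single f, Finsupp.sum]
      refine Submodule.sum_mem _ (fun a ha => ?_)
      by_cases h : a = 0
      · subst h
        rw [h0, AddMonoidAlgebra.single_zero]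
        exact Submodule.zero_mem _
      · have heq : AddMonoidAlgebra.single a (f.coeff a)
            = AddMonoidAlgebra.single (0 : ↥Sg) (f.coeff a) * AddMonoidAlgebra.single a (1 : E) := by
          rw [AddMonoidAlgebra.single_mul_single, zero_add, mul_one]
        rw [heq]
        refine Ideal.mul_mem_left _ _ (Ideal.subset_span ?_)
        exact ⟨a, fun hc => h (Subtype.ext hc), rfl⟩
    · rw [augIdeal, Ideal.span_le]
      rintro x ⟨lam, hlam, rfl⟩
      have : (AddMonoidAlgebra.single lam (1 : E)).coeff (0 : ↥Sg) = 0 := by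
        apply Finsupp.single_eq_of_ne'
        intro hc
        exact hlam (by rw [hc]; rfl)
      show ε _ = 0
      rw [hconst, this]
  rw [← hker]
  exact RingHom.ker_isMaximal_of_surjective ε.toRingHom hsurj


theorem stmt8 (E : Type*) [Field E] [CharZero E]
    (Sg : AddSubmonoid (ι → ℤ)) (hfg : Sg.FG)
    -- 0 is the only invertible element of Σ:
    (hsharp : ∀ x ∈ Sg, -x ∈ Sg → x = 0)
    -- Σ generates a strongly convex rational cone:
    (hconv : ∀ x ∈ ratConeOfSet (Sg : Set (ι → ℤ)),
      -x ∈ ratConeOfSet (Sg : Set (ι → ℤ)) → x = (0 : ι → ℚ)) :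
    IsLocalRing (AdicCompletion (augIdeal E Sg) (AddMonoidAlgebra E ↥Sg)) ∧
    ∀ f : AdicCompletion (augIdeal E Sg) (AddMonoidAlgebra E ↥Sg),
      IsUnit f ↔
        AdicCompletion.eval (augIdeal E Sg) (AddMonoidAlgebra E ↥Sg) 1 f ≠ 0 := by
  classical
  haveI hmax : (augIdeal E Sg).IsMaximal := aug_maximal E Sg hsharp
  set I := augIdeal E Sg
  set R := AddMonoidAlgebra E ↥Sg
  have hiff : ∀ f : AdicCompletion I R, IsUnit f ↔ f.val 1 ≠ 0 :=
    fun f => adic_isUnit_iff I f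
  have hnt : Nontrivial (AdicCompletion I R) := by
    refine nontrivial_of_ne 1 0 (fun h => ?_)
    have h1 := (hiff 1).mp isUnit_one
    apply h1
    rw [h]
    rfl
  constructor
  · apply IsLocalRing.of_nonunits_add
    intro a b ha hb
    rw [mem_nonunits_iff, hiff, not_not] at ha hb ⊢
    have : (a + b).val 1 = a.val 1 + b.val 1 := rfl
    rw [this, ha, hb, add_zero]
  · intro f
    rw [AdicCompletion.eval_apply]
    exact hiff f

end
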